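/- (Lemma 1(i)). Let ℓ ≥ 2 and let g be a kernel of ℓ dimensions. Fix k ∈ {0,…,ℓ−2} and define the kernel g̃ by g̃(v_0,…,v_{ℓ−1}) = g(v_0,…,v_{k−1}, v_{k+1}, v_k, v_{k+2},…,v_{ℓ−1}) (input coordinates k and k+1 swapped). If D_g(k) > D_g(k+1), then ∏_{i=0}^{ℓ−1} D_g(i) ≤ ∏_{i=0}^{ℓ−1} D_{g̃}(i); equivalently E(g) ≤ E(g̃). -/

import Mathlib

/-- The `i`-th partial distance of a kernel `g` of `ℓ` dimensions:
`D_g(i) = min { d_H(g(w•0•u), g(w•1•v)) : w ∈ {0,1}^i, u, v ∈ {0,1}^{ℓ−1−i} }`,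
phrased via pairs of inputs that agree on coordinates `< i` and differ as `0`/`1`
at coordinate `i`. -/
noncomputable def partialDist {ℓ : ℕ} (g : (Fin ℓ → ZMod 2) → (Fin ℓ → ZMod 2)) (i : ℕ) : ℕ :=
  sInf { d | ∃ x y : Fin ℓ → ZMod 2,
    (∀ j : Fin ℓ, (j : ℕ) < i → x j = y j) ∧
    (∀ j : Fin ℓ, (j : ℕ) = i → x j = 0 ∧ y j = 1) ∧
    d = hammingDist (g x) (g y) }

lemma pd_set_nonempty {ℓ : ℕ} (g : (Fin ℓ → ZMod 2) → (Fin ℓ → ZMod 2)) (i : ℕ) :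
    { d | ∃ x y : Fin ℓ → ZMod 2,
      (∀ j : Fin ℓ, (j : ℕ) < i → x j = y j) ∧
      (∀ j : Fin ℓ, (j : ℕ) = i → x j = 0 ∧ y j = 1) ∧
      d = hammingDist (g x) (g y) }.Nonempty := by
  refine ⟨_, fun _ => 0, fun j => if (j : ℕ) = i then 1 else 0, ?_, ?_, rfl⟩
  · intro j hj
    simp only [if_neg (Nat.ne_of_lt hj)]
  · intro j hj
    simp [hj]

lemma pd_swap_ne {ℓ : ℕ} (k : ℕ) (hk : k + 1 < ℓ)
    (g g' : (Fin ℓ → ZMod 2) → (Fin ℓ → ZMod 2))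
    (hg' : ∀ v, g' v = g (v ∘ ⇑(Equiv.swap (⟨k, by omega⟩ : Fin ℓ) (⟨k + 1, hk⟩ : Fin ℓ))))
    (i : ℕ) (hik : i ≠ k) (hik1 : i ≠ k + 1) :
    partialDist g i ≤ partialDist g' i := by
  set kf : Fin ℓ := ⟨k, by omega⟩
  set k1 : Fin ℓ := ⟨k + 1, hk⟩
  set s := Equiv.swap kf k1 with hs
  refine le_csInf (pd_set_nonempty g' i) ?_
  rintro d ⟨x, y, h1, h2, rfl⟩
  rw [hg' x, hg' y]
  apply Nat.sInf_le
  have hsv : ∀ j : Fin ℓ, ((s j : ℕ) = j) ∨ ((j : ℕ) = k ∧ (s j : ℕ) = k + 1) ∨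
      ((j : ℕ) = k + 1 ∧ (s j : ℕ) = k) := by
    intro j
    by_cases hjk : j = kf
    · right; left; subst hjk; simp [hs]; exact ⟨rfl, rfl⟩
    · by_cases hjk1 : j = k1
      · right; right; subst hjk1; simp [hs]; exact ⟨rfl, rfl⟩
      · left; rw [hs, Equiv.swap_apply_of_ne_of_ne hjk hjk1]
  refine ⟨x ∘ s, y ∘ s, ?_, ?_, rfl⟩
  · intro j hj
    have := hsv j
    -- need (s j : ℕ) < i
    have hlt : ((s j : ℕ)) < i := by
      rcases this with h | ⟨h1', h2'⟩ | ⟨h1', h2'⟩ <;> omega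
    exact h1 (s j) hlt
  · intro j hj
    have := hsv j
    have heq : ((s j : ℕ)) = i := by
      rcases this with h | ⟨h1', h2'⟩ | ⟨h1', h2'⟩ <;> omega
    exact h2 (s j) heq

lemma pd_swap_k1 {ℓ : ℕ} (k : ℕ) (hk : k + 1 < ℓ)
    (g g' : (Fin ℓ → ZMod 2) → (Fin ℓ → ZMod 2))
    (hg' : ∀ v, g' v = g (v ∘ ⇑(Equiv.swap (⟨k, by omega⟩ : Fin ℓ) (⟨k + 1, hk⟩ : Fin ℓ)))) :
    partialDist g k ≤ partialDist g' (k + 1) := by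
  set kf : Fin ℓ := ⟨k, by omega⟩
  set k1 : Fin ℓ := ⟨k + 1, hk⟩
  set s := Equiv.swap kf k1 with hs
  refine le_csInf (pd_set_nonempty g' (k + 1)) ?_
  rintro d ⟨x, y, h1, h2, rfl⟩
  rw [hg' x, hg' y]
  apply Nat.sInf_le
  refine ⟨x ∘ s, y ∘ s, ?_, ?_, rfl⟩
  · intro j hj
    have hjk : j ≠ kf := Fin.ne_of_val_ne (by simpa using Nat.ne_of_lt hj)
    have hjk1 : j ≠ k1 := Fin.ne_of_val_ne (by show (j : ℕ) ≠ k + 1; omega)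
    simp only [Function.comp_apply, hs, Equiv.swap_apply_of_ne_of_ne hjk hjk1]
    exact h1 j (by omega)
  · intro j hj
    have hj' : j = kf := Fin.ext (by simpa using hj)
    subst hj'
    simp only [Function.comp_apply, hs, Equiv.swap_apply_left]
    exact h2 k1 rfl

lemma pd_swap_k {ℓ : ℕ} (k : ℕ) (hk : k + 1 < ℓ)
    (g g' : (Fin ℓ → ZMod 2) → (Fin ℓ → ZMod 2))
    (hg' : ∀ v, g' v = g (v ∘ ⇑(Equiv.swap (⟨k, by omega⟩ : Fin ℓ) (⟨k + 1, hk⟩ : Fin ℓ)))) :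
    min (partialDist g k) (partialDist g (k + 1)) ≤ partialDist g' k := by
  set kf : Fin ℓ := ⟨k, by omega⟩
  set k1 : Fin ℓ := ⟨k + 1, hk⟩
  set s := Equiv.swap kf k1 with hs
  refine le_csInf (pd_set_nonempty g' k) ?_
  rintro d ⟨x, y, h1, h2, rfl⟩
  rw [hg' x, hg' y]
  have hswap_lt : ∀ j : Fin ℓ, (j : ℕ) < k → x (s j) = x j ∧ y (s j) = y j := by
    intro j hj
    have hjk : j ≠ kf := Fin.ne_of_val_ne (by simpa using Nat.ne_of_lt hj)
    have hjk1 : j ≠ k1 := Fin.ne_of_val_ne (by show (j : ℕ) ≠ k + 1; omega)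
    rw [hs, Equiv.swap_apply_of_ne_of_ne hjk hjk1]
    exact ⟨rfl, rfl⟩
  have h2' := h2 kf rfl
  have hcase : (x k1 = y k1) ∨ (x k1 = 0 ∧ y k1 = 1) ∨ (x k1 = 1 ∧ y k1 = 0) := by
    rcases (by decide : ∀ a b : ZMod 2, a = b ∨ (a = 0 ∧ b = 1) ∨ (a = 1 ∧ b = 0)) (x k1) (y k1)
      with h | h | h
    · exact Or.inl h
    · exact Or.inr (Or.inl h)
    · exact Or.inr (Or.inr h)
  rcases hcase with hc | ⟨hc0, hc1⟩ | ⟨hc1, hc0⟩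
  · -- distance at least D_g(k+1)
    refine le_trans (min_le_right _ _) (Nat.sInf_le ?_)
    refine ⟨x ∘ s, y ∘ s, ?_, ?_, rfl⟩
    · intro j hj
      rcases Nat.lt_or_ge (j : ℕ) k with h | h
      · obtain ⟨ha, hb⟩ := hswap_lt j h
        rw [Function.comp_apply, Function.comp_apply, ha, hb]
        exact h1 j h
      · have hj' : j = kf := Fin.ext (by show (j : ℕ) = k; omega)
        subst hj'
        simp only [Function.comp_apply, hs, Equiv.swap_apply_left]
        exact hc
    · intro j hj
      have hj' : j = k1 := Fin.ext (by simpa using hj)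
      subst hj'
      simp only [Function.comp_apply, hs, Equiv.swap_apply_right]
      exact h2'
  · -- differ at k1 as 0/1: distance at least D_g(k)
    refine le_trans (min_le_left _ _) (Nat.sInf_le ?_)
    refine ⟨x ∘ s, y ∘ s, ?_, ?_, rfl⟩
    · intro j hj
      obtain ⟨ha, hb⟩ := hswap_lt j hj
      rw [Function.comp_apply, Function.comp_apply, ha, hb]
      exact h1 j hj
    · intro j hj
      have hj' : j = kf := Fin.ext (by simpa using hj)
      subst hj'
      simp only [Function.comp_apply, hs, Equiv.swap_apply_left]
      exact ⟨hc0, hc1⟩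
  · -- differ at k1 as 1/0: swap roles
    refine le_trans (min_le_left _ _) (Nat.sInf_le ?_)
    refine ⟨y ∘ s, x ∘ s, ?_, ?_, hammingDist_comm _ _⟩
    · intro j hj
      obtain ⟨ha, hb⟩ := hswap_lt j hj
      rw [Function.comp_apply, Function.comp_apply, ha, hb]
      exact (h1 j hj).symm
    · intro j hj
      have hj' : j = kf := Fin.ext (by simpa using hj)
      subst hj'
      simp only [Function.comp_apply, hs, Equiv.swap_apply_left]
      exact ⟨hc0, hc1⟩

theorem swap_prod_partialDist_le {ℓ : ℕ} (hℓ : 2 ≤ ℓ)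
    (g : (Fin ℓ → ZMod 2) → (Fin ℓ → ZMod 2)) (hg : Function.Bijective g)
    (k : ℕ) (hk : k ≤ ℓ - 2)
    (g' : (Fin ℓ → ZMod 2) → (Fin ℓ → ZMod 2))
    (hg' : ∀ v, g' v =
      g (v ∘ ⇑(Equiv.swap (⟨k, by omega⟩ : Fin ℓ) (⟨k + 1, by omega⟩ : Fin ℓ))))
    (hgt : partialDist g (k + 1) < partialDist g k) :
    ∏ i ∈ Finset.range ℓ, partialDist g i ≤ ∏ i ∈ Finset.range ℓ, partialDist g' i := by
  have hk1 : k + 1 < ℓ := by omega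
  have hk0 : k < ℓ := by omega
  have hg2 : ∀ v, g' v =
      g (v ∘ ⇑(Equiv.swap (⟨k, hk0⟩ : Fin ℓ) (⟨k + 1, hk1⟩ : Fin ℓ))) := hg'
  -- reverse direction relation: g v = g' (v ∘ s)
  have hgrev : ∀ v, g v =
      g' (v ∘ ⇑(Equiv.swap (⟨k, hk0⟩ : Fin ℓ) (⟨k + 1, hk1⟩ : Fin ℓ))) := by
    intro v
    have hvv : ((v ∘ ⇑(Equiv.swap (⟨k, hk0⟩ : Fin ℓ) (⟨k + 1, hk1⟩ : Fin ℓ))) ∘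
        ⇑(Equiv.swap (⟨k, hk0⟩ : Fin ℓ) (⟨k + 1, hk1⟩ : Fin ℓ))) = v := by
      funext j
      simp [Function.comp_apply, Equiv.swap_apply_self]
    rw [hg2, hvv]
  have hEq : ∀ i : ℕ, i ≠ k → i ≠ k + 1 → partialDist g' i = partialDist g i :=
    fun i h1 h2 => le_antisymm
      (pd_swap_ne k hk1 g' g hgrev i h1 h2)
      (pd_swap_ne k hk1 g g' hg2 i h1 h2)
  have hBk : partialDist g (k + 1) ≤ partialDist g' k := by
    have := pd_swap_k k hk1 g g' hg2
    omega
  have hBk1 : partialDist g k ≤ partialDist g' (k + 1) :=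
    pd_swap_k1 k hk1 g g' hg2
  have hkmem : k ∈ Finset.range ℓ := Finset.mem_range.mpr (by omega)
  have hk1mem : k + 1 ∈ (Finset.range ℓ).erase k :=
    Finset.mem_erase.mpr ⟨by omega, Finset.mem_range.mpr hk1⟩
  rw [← Finset.mul_prod_erase _ _ hkmem, ← Finset.mul_prod_erase _ _ hk1mem,
    ← Finset.mul_prod_erase _ (partialDist g') hkmem,
    ← Finset.mul_prod_erase _ (partialDist g') hk1mem]
  have hrest : ∏ i ∈ ((Finset.range ℓ).erase k).erase (k + 1), partialDist g i =
      ∏ i ∈ ((Finset.range ℓ).erase k).erase (k + 1), partialDist g' i := by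
    refine Finset.prod_congr rfl ?_
    intro i hi
    have h1 := (Finset.mem_erase.mp hi).1
    have h2 := (Finset.mem_erase.mp (Finset.mem_erase.mp hi).2).1
    exact (hEq i h2 h1).symm
  rw [hrest, ← mul_assoc, ← mul_assoc]
  have hmul : partialDist g k * partialDist g (k + 1) ≤
      partialDist g' k * partialDist g' (k + 1) := by
    rw [mul_comm (partialDist g k)]
    exact Nat.mul_le_mul hBk hBk1
  exact Nat.mul_le_mul hmul le_rfl
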